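/- arXiv:2303.17054 — 5 statements merged into one kernel-verified Lean document; each statement's English description precedes it below -/
import Mathlib

section
/- Let V be a complex normed space, X ⊆ V a complex-linear subspace, and P : V → V a continuous real-linear map with ‖P(v)‖ ≤ ‖v‖ for all v, with range contained in X, and with P(x) = x for all x ∈ X. Then the map Q : v ↦ (1/2)•(P(v) − i•P(i•v)) is complex-linear and continuous, satisfies ‖Q(v)‖ ≤ ‖v‖ for all v, has range contained in X, and satisfies Q(x) = x for all x ∈ X. In particular, from a contractive real-linear projection of V onto a complex subspace X one obtains a contractive complex-linear projection of V onto X. -/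
/-- From a contractive real-linear projection `P` of a complex normed space `V`
onto a complex subspace `X`, the map `Q(v) = (1/2) • (P v - i • P (i • v))` is a
contractive complex-linear projection of `V` onto `X`. -/
theorem stmt_6 {V : Type*} [NormedAddCommGroup V] [NormedSpace ℂ V]
    (X : Submodule ℂ V) (P : V →L[ℝ] V)
    (hPcontr : ∀ v : V, ‖P v‖ ≤ ‖v‖)
    (hPrange : ∀ v : V, P v ∈ X)
    (hPfix : ∀ x ∈ X, P x = x) :
    ∃ Q : V →L[ℂ] V,
      (∀ v : V, Q v = (2 : ℂ)⁻¹ • (P v - Complex.I • P (Complex.I • v))) ∧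
      (∀ v : V, ‖Q v‖ ≤ ‖v‖) ∧
      (∀ v : V, Q v ∈ X) ∧
      (∀ x ∈ X, Q x = x) := by
  have hsplit : ∀ (c : ℂ) (v : V), c • v = c.re • v + c.im • (Complex.I • v) := by
    intro c v
    rw [show (c.re : ℝ) • v = (c.re : ℂ) • v from (Complex.coe_smul c.re v).symm,
        show (c.im : ℝ) • (Complex.I • v) = (c.im : ℂ) • (Complex.I • v) from
          (Complex.coe_smul c.im (Complex.I • v)).symm,
        smul_smul, ← add_smul]
    congr 1
    simp [Complex.ext_iff]
  have hnorm : ∀ v : V, ‖(2 : ℂ)⁻¹ • (P v - Complex.I • P (Complex.I • v))‖ ≤ 1 * ‖v‖ := by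
    intro v
    rw [norm_smul]
    have h1 : ‖P v - Complex.I • P (Complex.I • v)‖ ≤ ‖v‖ + ‖v‖ := by
      refine (norm_sub_le _ _).trans ?_
      gcongr
      · exact hPcontr v
      · rw [norm_smul, Complex.norm_I, one_mul]
        exact (hPcontr _).trans (by rw [norm_smul, Complex.norm_I, one_mul])
    have : ‖(2 : ℂ)⁻¹‖ = 2⁻¹ := by norm_num
    rw [this]
    linarith
  let Qlin : V →ₗ[ℂ] V :=
    { toFun := fun v => (2 : ℂ)⁻¹ • (P v - Complex.I • P (Complex.I • v))
      map_add' := by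
        intro u v
        simp only [smul_add, map_add]
        module
      map_smul' := by
        intro c v
        simp only [RingHom.id_apply]
        have h1 : P (c • v) = c.re • P v + c.im • P (Complex.I • v) := by
          rw [hsplit c v, map_add, P.map_smul, P.map_smul]
        have h2 : P (Complex.I • c • v) = c.re • P (Complex.I • v) + c.im • (- P v) := by
          have : Complex.I • c • v = c.re • (Complex.I • v) + c.im • (Complex.I • Complex.I • v) := by
            rw [smul_comm, hsplit c (Complex.I • v), smul_comm c.im]
          have hII : P (Complex.I • Complex.I • v) = - P v := by
            rw [smul_smul, Complex.I_mul_I, neg_one_smul ℂ, map_neg]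
          rw [this, map_add, P.map_smul, P.map_smul, hII]
        rw [h1, h2]
        set A := P v
        set B := P (Complex.I • v)
        rw [show (c.re : ℝ) • A = (c.re : ℂ) • A from (Complex.coe_smul _ _).symm,
            show (c.re : ℝ) • B = (c.re : ℂ) • B from (Complex.coe_smul _ _).symm,
            show (c.im : ℝ) • B = (c.im : ℂ) • B from (Complex.coe_smul _ _).symm,
            show (c.im : ℝ) • (-A) = (c.im : ℂ) • (-A) from (Complex.coe_smul _ _).symm]
        have hc : c = (c.re : ℂ) + (c.im : ℂ) * Complex.I := (Complex.re_add_im c).symm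
        set a : ℝ := c.re
        set b : ℝ := c.im
        rw [hc]
        match_scalars
        · ring
        · linear_combination ((b : ℂ) / 2) * Complex.I_sq }
  let Q : V →L[ℂ] V := Qlin.mkContinuous 1 hnorm
  refine ⟨Q, fun v => rfl, fun v => by have h := hnorm v; rw [one_mul] at h; exact h, ?_, ?_⟩
  · intro v
    exact X.smul_mem _ (X.sub_mem (hPrange v) (X.smul_mem _ (hPrange _)))
  · intro x hx
    show (2 : ℂ)⁻¹ • (P x - Complex.I • P (Complex.I • x)) = x
    rw [hPfix x hx, hPfix _ (X.smul_mem _ hx), smul_smul, Complex.I_mul_I, neg_one_smul,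
        sub_neg_eq_add]
    rw [show x + x = (2 : ℂ) • x by rw [two_smul], smul_smul]
    norm_num
end

section
/- Let G be a finite group acting by linear isometries on real normed spaces W and S. Let V be a G-invariant subspace of W (g • v ∈ V for all g ∈ G, v ∈ V), let φ : V → S be a continuous real-linear G-equivariant map (φ(g • v) = g • φ(v) for v ∈ V), and let ψ : W → S be any continuous real-linear map with ψ(v) = φ(v) for all v ∈ V. Then there is a continuous real-linear map ρ : W → S given by ρ(x) = (1/|G|) • Σ_{g ∈ G} g⁻¹ • ψ(g • x), which satisfies ‖ρ‖ ≤ ‖ψ‖, is G-equivariant (ρ(g • x) = g • ρ(x) for all g ∈ G, x ∈ W), and extends φ (ρ(v) = φ(v) for all v ∈ V). -/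
/-- Averaging trick for finite groups acting by linear isometries: any continuous
real-linear extension `ψ` of a `G`-equivariant continuous real-linear map `φ`
defined on a `G`-invariant subspace can be averaged to a `G`-equivariant
continuous real-linear extension `ρ` with `‖ρ‖ ≤ ‖ψ‖`. -/
theorem stmt_8 {G W S : Type*} [Group G] [Fintype G]
    [NormedAddCommGroup W] [NormedSpace ℝ W]
    [NormedAddCommGroup S] [NormedSpace ℝ S]
    [DistribMulAction G W] [SMulCommClass G ℝ W]
    [DistribMulAction G S] [SMulCommClass G ℝ S]
    (hisoW : ∀ (g : G) (x : W), ‖g • x‖ = ‖x‖)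
    (hisoS : ∀ (g : G) (x : S), ‖g • x‖ = ‖x‖)
    (V : Submodule ℝ W)
    (hV : ∀ (g : G) (v : W), v ∈ V → g • v ∈ V)
    (φ : V →L[ℝ] S)
    (hφeq : ∀ (g : G) (v : V), φ ⟨g • (v : W), hV g v v.2⟩ = g • φ v)
    (ψ : W →L[ℝ] S)
    (hψext : ∀ v : V, ψ (v : W) = φ v) :
    ∃ ρ : W →L[ℝ] S,
      (∀ x : W, ρ x = (Fintype.card G : ℝ)⁻¹ • ∑ g : G, g⁻¹ • ψ (g • x)) ∧
      ‖ρ‖ ≤ ‖ψ‖ ∧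
      (∀ (g : G) (x : W), ρ (g • x) = g • ρ x) ∧
      (∀ v : V, ρ (v : W) = φ v) := by
  have hcard : (0 : ℝ) < (Fintype.card G : ℝ) := by
    exact_mod_cast Fintype.card_pos
  set c : ℝ := (Fintype.card G : ℝ)⁻¹ with hc
  have hcpos : 0 < c := inv_pos.mpr hcard
  -- the averaged linear map
  let ρlin : W →ₗ[ℝ] S :=
    { toFun := fun x => c • ∑ g : G, g⁻¹ • ψ (g • x)
      map_add' := by
        intro x y
        simp [smul_add, Finset.sum_add_distrib]
      map_smul' := by
        intro r x
        simp only [RingHom.id_apply]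
        rw [smul_comm r c]
        congr 1
        rw [Finset.smul_sum]
        refine Finset.sum_congr rfl fun g _ => ?_
        rw [smul_comm (g : G) r x, map_smul, smul_comm] }
  have hbound : ∀ x : W, ‖ρlin x‖ ≤ ‖ψ‖ * ‖x‖ := by
    intro x
    have h1 : ‖∑ g : G, g⁻¹ • ψ (g • x)‖ ≤ ∑ g : G, ‖ψ‖ * ‖x‖ := by
      refine (norm_sum_le _ _).trans (Finset.sum_le_sum fun g _ => ?_)
      rw [hisoS]
      calc ‖ψ (g • x)‖ ≤ ‖ψ‖ * ‖g • x‖ := ψ.le_opNorm _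
        _ = ‖ψ‖ * ‖x‖ := by rw [hisoW]
    have : ‖ρlin x‖ = c * ‖∑ g : G, g⁻¹ • ψ (g • x)‖ := by
      simp only [ρlin, LinearMap.coe_mk, AddHom.coe_mk, norm_smul, Real.norm_eq_abs,
        abs_of_pos hcpos]
    rw [this]
    calc c * ‖∑ g : G, g⁻¹ • ψ (g • x)‖ ≤ c * ∑ g : G, ‖ψ‖ * ‖x‖ := by
          exact mul_le_mul_of_nonneg_left h1 hcpos.le
      _ = c * ((Fintype.card G : ℝ) * (‖ψ‖ * ‖x‖)) := by
          rw [Finset.sum_const, Finset.card_univ, nsmul_eq_mul]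
      _ = ‖ψ‖ * ‖x‖ := by
          rw [← mul_assoc, hc, inv_mul_cancel₀ (ne_of_gt hcard), one_mul]
  refine ⟨ρlin.mkContinuous ‖ψ‖ hbound, fun x => rfl, ?_, ?_, ?_⟩
  · exact LinearMap.mkContinuous_norm_le _ (norm_nonneg ψ) _
  · intro h x
    show c • ∑ g : G, g⁻¹ • ψ (g • h • x) = h • (c • ∑ g : G, g⁻¹ • ψ (g • x))
    rw [smul_comm h c]
    congr 1
    rw [Finset.smul_sum]
    refine Fintype.sum_equiv (Equiv.mulRight h) _ _ fun g => ?_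
    simp only [Equiv.coe_mulRight]
    rw [smul_smul, ← mul_smul h, mul_inv_rev, mul_inv_cancel_left]
  · intro v
    show c • ∑ g : G, g⁻¹ • ψ (g • (v : W)) = φ v
    have : ∀ g : G, g⁻¹ • ψ (g • (v : W)) = φ v := by
      intro g
      rw [show ψ (g • (v : W)) = φ ⟨g • (v : W), hV g v v.2⟩ from hψext ⟨_, hV g v v.2⟩,
        hφeq, ← mul_smul, inv_mul_cancel, one_smul]
    rw [Finset.sum_congr rfl fun g _ => this g, Finset.sum_const, Finset.card_univ,
      ← Nat.cast_smul_eq_nsmul ℝ, smul_smul, hc, inv_mul_cancel₀ (ne_of_gt hcard), one_smul]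
end

section
/- Let A be a commutative ring and π : A → A a ring homomorphism with π ∘ π = id. If q ∈ A is an idempotent (q·q = q) with π(q) ≠ q, then r := q − q·π(q) is a nonzero idempotent satisfying r·π(r) = 0. -/
/-- If `π` is a ring involution of a commutative ring and `q` is an idempotent
with `π q ≠ q`, then `r = q - q * π q` is a nonzero idempotent with `r * π r = 0`. -/
theorem stmt_10 {A : Type*} [CommRing A] (π : A →+* A)
    (hπ : ∀ a : A, π (π a) = a)
    (q : A) (hq : q * q = q) (hne : π q ≠ q) :
    q - q * π q ≠ 0 ∧
    (q - q * π q) * (q - q * π q) = q - q * π q ∧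
    (q - q * π q) * π (q - q * π q) = 0 := by
  have hpq : π q * π q = π q := by rw [← map_mul, hq]
  refine ⟨?_, by linear_combination (1 - 2 * π q + π q * π q) * hq + q * hpq, ?_⟩
  · intro h
    have h1 : q = q * π q := by linear_combination h
    have h2 : π q = π q * q := by
      have := congrArg π h1
      rwa [map_mul, hπ] at this
    exact hne (by calc π q = π q * q := h2
                  _ = q * π q := mul_comm _ _
                  _ = q := h1.symm)
  · have h3 : π (q - q * π q) = π q - π q * q := by rw [map_sub, map_mul, hπ]
    rw [h3]
    linear_combination (π q * π q - π q) * hq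
end

section
/- Let A be a commutative ring and π : A → A a ring homomorphism with π ∘ π = id. Let q ∈ A be an idempotent with π(q) = 1 − q. Then the map x ↦ x + π(x), restricted to the set q·A = {q·a : a ∈ A}, is a bijection from q·A onto the fixed subring {a ∈ A : π(a) = a}; moreover this map is additive and multiplicative on q·A: (x + π(x))·(y + π(y)) = x·y + π(x·y) for all x, y ∈ q·A. -/
/-- If `π` is a ring involution of a commutative ring and `q` is an idempotent
with `π q = 1 - q`, then `x ↦ x + π x` is a bijection from the corner `q·A` onto
the fixed subring of `π`, and is additive and multiplicative on `q·A`. -/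
theorem stmt_11 {A : Type*} [CommRing A] (π : A →+* A)
    (hπ : ∀ a : A, π (π a) = a)
    (q : A) (hq : q * q = q) (hq' : π q = 1 - q) :
    Set.BijOn (fun x => x + π x) {x : A | ∃ a : A, x = q * a} {a : A | π a = a} ∧
    (∀ x ∈ {x : A | ∃ a : A, x = q * a}, ∀ y ∈ {x : A | ∃ a : A, x = q * a},
      (x + y) + π (x + y) = (x + π x) + (y + π y)) ∧
    (∀ x ∈ {x : A | ∃ a : A, x = q * a}, ∀ y ∈ {x : A | ∃ a : A, x = q * a},
      (x * y) + π (x * y) = (x + π x) * (y + π y)) := by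
  have key : ∀ x : A, (∃ a : A, x = q * a) → q * π x = 0 := by
    rintro x ⟨a, rfl⟩
    have h0 : q * (1 - q) = 0 := by rw [mul_sub, mul_one, hq, sub_self]
    rw [map_mul, hq', ← mul_assoc, h0, zero_mul]
  have qx : ∀ x : A, (∃ a : A, x = q * a) → q * x = x := by
    rintro x ⟨a, rfl⟩
    rw [← mul_assoc, hq]
  refine ⟨⟨?_, ?_, ?_⟩, ?_, ?_⟩
  · rintro x hx
    simp only [Set.mem_setOf_eq, map_add, hπ]
    ring
  · rintro x hx y hy h
    simp only [Set.mem_setOf_eq] at h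
    have : q * (x + π x) = q * (y + π y) := by rw [h]
    rwa [mul_add, mul_add, key x hx, key y hy, add_zero, add_zero,
      qx x hx, qx y hy] at this
  · rintro a ha
    simp only [Set.mem_setOf_eq] at ha
    refine ⟨q * a, ⟨a, rfl⟩, ?_⟩
    simp only [map_mul, hq', ha]
    ring
  · intro x _ y _
    simp only [map_add]; ring
  · rintro x hx y hy
    have h1 : x * π y = 0 := by
      obtain ⟨a, ha⟩ := hx
      rw [ha, mul_comm q a, mul_assoc, key y hy, mul_zero]
    have h2 : π x * y = 0 := by
      obtain ⟨b, hb⟩ := hy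
      rw [hb, ← mul_assoc, mul_comm (π x) q, key x hx, zero_mul]
    rw [map_mul]
    linear_combination -h1 - h2
end

section
/- Let H be a complex Hilbert space and U : H → H a conjugation, i.e. U is additive, U(c • x) = (conj c) • U(x), ‖U(x)‖ = ‖x‖, and U(U(x)) = x. Let S be a set of continuous complex-linear operators on H such that for every T ∈ S there exists T' ∈ S with T'(x) = U(T(U(x))) for all x. Then for every operator T in the double centralizer (bicommutant) of S in the ring of continuous complex-linear operators on H, there exists an operator T' also in the double centralizer of S with T'(x) = U(T(U(x))) for all x ∈ H. -/
/-- If a set `S` of operators on a complex Hilbert space is invariant under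
conjugation by a conjugation `U`, then so is its double centralizer
(bicommutant) in the ring of continuous complex-linear operators. -/
theorem stmt_18 {H : Type*} [NormedAddCommGroup H] [InnerProductSpace ℂ H]
    [CompleteSpace H]
    (U : H → H)
    (hadd : ∀ x y : H, U (x + y) = U x + U y)
    (hsmul : ∀ (c : ℂ) (x : H), U (c • x) = (starRingEnd ℂ) c • U x)
    (hiso : ∀ x : H, ‖U x‖ = ‖x‖)
    (hinv : ∀ x : H, U (U x) = x)
    (S : Set (H →L[ℂ] H))
    (hS : ∀ T ∈ S, ∃ T' ∈ S, ∀ x : H, T' x = U (T (U x))) :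
    ∀ T ∈ Subring.centralizer
        ((Subring.centralizer S : Subring (H →L[ℂ] H)) : Set (H →L[ℂ] H)),
      ∃ T' ∈ Subring.centralizer
          ((Subring.centralizer S : Subring (H →L[ℂ] H)) : Set (H →L[ℂ] H)),
        ∀ x : H, T' x = U (T (U x)) := by
  -- Construct Φ T : the operator x ↦ U (T (U x))
  have key : ∀ T : H →L[ℂ] H, ∃ T' : H →L[ℂ] H, ∀ x : H, T' x = U (T (U x)) := by
    intro T
    refine ⟨LinearMap.mkContinuous
      { toFun := fun x => U (T (U x))
        map_add' := fun x y => by rw [hadd, map_add, hadd]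
        map_smul' := fun c x => by
          simp only [hsmul, map_smul, RingHom.id_apply, Complex.conj_conj] }
      ‖T‖ (fun x => by
        simp only [LinearMap.coe_mk, AddHom.coe_mk]
        rw [hiso]
        calc ‖T (U x)‖ ≤ ‖T‖ * ‖U x‖ := T.le_opNorm _
          _ = ‖T‖ * ‖x‖ := by rw [hiso]), fun x => rfl⟩
  choose Φ hΦ using key
  -- Φ is multiplicative and involutive (pointwise)
  have hmul : ∀ A B : H →L[ℂ] H, Φ (A * B) = Φ A * Φ B := by
    intro A B
    ext x
    simp only [ContinuousLinearMap.mul_apply, hΦ, hinv]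
  have hinvo : ∀ A : H →L[ℂ] H, Φ (Φ A) = A := by
    intro A
    ext x
    simp only [hΦ, hinv]
  -- if A commutes with B then Φ A commutes with Φ B
  have hcomm : ∀ A B : H →L[ℂ] H, A * B = B * A → Φ A * Φ B = Φ B * Φ A := by
    intro A B h
    rw [← hmul, ← hmul, h]
  -- Φ maps the centralizer of S into itself
  have hcent : ∀ C : H →L[ℂ] H, C ∈ Subring.centralizer S →
      Φ C ∈ Subring.centralizer S := by
    intro C hC
    rw [Subring.mem_centralizer_iff] at hC ⊢
    intro T0 hT0
    obtain ⟨T0', hT0', hT0'eq⟩ := hS T0 hT0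
    have hT0'Φ : T0' = Φ T0 := by
      ext x; rw [hT0'eq, hΦ]
    have := hcomm T0' C (hC T0' hT0')
    rw [hT0'Φ, hinvo] at this
    exact this
  intro T hT
  rw [Subring.mem_centralizer_iff] at hT
  refine ⟨Φ T, ?_, hΦ T⟩
  rw [Subring.mem_centralizer_iff]
  intro C hC
  have hC' := hcent C hC
  have := hcomm (Φ C) T (hT (Φ C) hC')
  rw [hinvo] at this
  exact this
end
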